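/- Let m ≥ 1, let T_1,…,T_m ∈ ℝ be scores, and for each nonempty S ⊆ [m] set p(S) = f(|S|, (T_i)_{i∈S}) ∈ [0,1], where for each s ∈ {1,…,m} the function f(s, ·) : ℝ^s → [0,1] is invariant under permutations of its arguments and nondecreasing in each argument. Let t_α(S) = 1{p(S) ≤ α} and p̄(S) = inf{α ∈ [0,1] : t̄_α(S) = 1}. Then for every nonempty S ⊆ [m], p̄(S) = max_{0 ≤ i ≤ m−|S|} p([m] ∖ I_i), where I_0 = ∅ and, for 1 ≤ i ≤ m−|S|, I_i ⊆ [m]∖S is any set of i indices whose scores are the i smallest scores in [m]∖S (i.e. T_j ≤ T_k for all j ∈ I_i and k ∈ ([m]∖S)∖I_i). -/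

import Mathlib

/-- for a symmetric monotonic local test `t_α(S) = 1{p(S) ≤ α}` with
`p(S) = f(|S|, (T_i)_{i∈S})`, the closed-testing adjusted p-value of `S` equals the
maximum of `p([m] ∖ I_i)` over `0 ≤ i ≤ m - |S|`, where `I_i` collects `i` indices
carrying the `i` smallest scores in `Sᶜ`. -/
theorem stmt_1 (m : ℕ) (hm : 1 ≤ m) (T : Fin m → ℝ)
    (f : (s : ℕ) → (Fin s → ℝ) → ℝ)
    (hrange : ∀ (s : ℕ) (x : Fin s → ℝ), f s x ∈ Set.Icc (0:ℝ) 1)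
    (hsym : ∀ (s : ℕ) (σ : Equiv.Perm (Fin s)) (x : Fin s → ℝ), f s (x ∘ σ) = f s x)
    (hmono : ∀ (s : ℕ) (x y : Fin s → ℝ), (∀ j, x j ≤ y j) → f s x ≤ f s y)
    (p : Finset (Fin m) → ℝ)
    (hpdef : ∀ S : Finset (Fin m),
      p S = f S.card (fun j => T ((S.orderIsoOfFin rfl j : S) : Fin m)))
    (S : Finset (Fin m)) (hS : S.Nonempty)
    (I : ℕ → Finset (Fin m))
    (hI0 : I 0 = ∅)
    (hIprop : ∀ i, 1 ≤ i → i ≤ m - S.card →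
      I i ⊆ Sᶜ ∧ (I i).card = i ∧ ∀ j ∈ I i, ∀ k ∈ Sᶜ \ I i, T j ≤ T k) :
    sInf {α | α ∈ Set.Icc (0:ℝ) 1 ∧ ∀ J : Finset (Fin m), S ⊆ J → p J ≤ α}
      = (Finset.range (m - S.card + 1)).sup'
          (by simp) (fun i => p (Finset.univ \ I i)) := by
  have hp' : ∀ (A : Finset (Fin m)) (s : ℕ) (hA : A.card = s),
      p A = f s (fun j => T ((A.orderIsoOfFin hA j : A) : Fin m)) := by
    intro A s hA; subst hA; exact hpdef A
  have prange : ∀ A : Finset (Fin m), p A ∈ Set.Icc (0:ℝ) 1 := by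
    intro A; rw [hpdef]; exact hrange _ _
  -- key: comparison via a score-dominating bijection
  have key : ∀ (A B : Finset (Fin m)) (hc : B.card = A.card) (e : ↥A ≃ ↥B),
      (∀ x : ↥A, T ↑x ≤ T ↑(e x)) → p A ≤ p B := by
    intro A B hc e he
    rw [hp' A A.card rfl, hp' B A.card hc]
    set oA := A.orderIsoOfFin rfl with hoA
    set oB := B.orderIsoOfFin hc with hoB
    have hs := hsym A.card (oA.toEquiv.trans (e.trans oB.toEquiv.symm))
      (fun j => T ((oB j : B) : Fin m))
    rw [← hs]
    apply hmono
    intro j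
    simpa using he (oA.toEquiv j)
  -- hIgood : properties of I i for all i ≤ m - S.card
  have hIgood : ∀ i, i ≤ m - S.card →
      I i ⊆ Sᶜ ∧ (I i).card = i ∧ ∀ j ∈ I i, ∀ k ∈ Sᶜ \ I i, T j ≤ T k := by
    intro i hi
    rcases Nat.eq_zero_or_pos i with h0 | h1
    · subst h0
      refine ⟨by simp [hI0], by simp [hI0], by simp [hI0]⟩
    · exact hIprop i h1 hi
  -- build : p J ≤ p (univ \ K) for K with the min property
  have build : ∀ (J K : Finset (Fin m)), K ⊆ Sᶜ → S ⊆ J → K.card = m - J.card →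
      (∀ j ∈ K, ∀ k ∈ Sᶜ \ K, T j ≤ T k) → p J ≤ p (Finset.univ \ K) := by
    intro J K hKS hSJ hKcard hmin
    have hJm : J.card ≤ m := by
      simpa using Finset.card_le_card (Finset.subset_univ J)
    have hB : (Finset.univ \ K).card = J.card := by
      rw [Finset.card_sdiff_of_subset (Finset.subset_univ K), Finset.card_univ, Fintype.card_fin, hKcard]
      omega
    set B := Finset.univ \ K with hBdef
    have hDE : (J \ B).card = (B \ J).card := Finset.card_sdiff_comm hB.symm
    let ψ : ↥(J \ B) ≃ ↥(B \ J) := Finset.equivOfCardEq hDE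
    let g : ↥J → ↥B := fun x =>
      if h : (x : Fin m) ∈ B then ⟨x, h⟩
      else ⟨(ψ ⟨(x : Fin m), Finset.mem_sdiff.mpr ⟨x.2, h⟩⟩ : Fin m),
        (Finset.mem_sdiff.mp (ψ ⟨(x : Fin m), Finset.mem_sdiff.mpr ⟨x.2, h⟩⟩).2).1⟩
    have hginj : Function.Injective g := by
      intro a b hab
      by_cases h1 : (a : Fin m) ∈ B <;> by_cases h2 : (b : Fin m) ∈ B
      · simp only [g, dif_pos h1, dif_pos h2, Subtype.mk.injEq] at hab
        exact Subtype.ext hab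
      · exfalso
        simp only [g, dif_pos h1, dif_neg h2, Subtype.mk.injEq] at hab
        have := (Finset.mem_sdiff.mp (ψ ⟨(b : Fin m), Finset.mem_sdiff.mpr ⟨b.2, h2⟩⟩).2).2
        rw [← hab] at this
        exact this a.2
      · exfalso
        simp only [g, dif_neg h1, dif_pos h2, Subtype.mk.injEq] at hab
        have := (Finset.mem_sdiff.mp (ψ ⟨(a : Fin m), Finset.mem_sdiff.mpr ⟨a.2, h1⟩⟩).2).2
        rw [hab] at this
        exact this b.2
      · simp only [g, dif_neg h1, dif_neg h2, Subtype.mk.injEq] at hab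
        have := ψ.injective (Subtype.ext hab)
        exact Subtype.ext (Subtype.mk.inj this)
    have hgbij : Function.Bijective g := by
      refine (Fintype.bijective_iff_injective_and_card g).mpr ⟨hginj, ?_⟩
      simp [Fintype.card_coe, hB]
    refine key J B hB (Equiv.ofBijective g hgbij) ?_
    intro x
    show T ↑x ≤ T ↑(g x)
    by_cases h : (x : Fin m) ∈ B
    · simp [g, dif_pos h]
    · simp only [g, dif_neg h]
      have hxK : (x : Fin m) ∈ K := by
        by_contra hK
        exact h (Finset.mem_sdiff.mpr ⟨Finset.mem_univ _, hK⟩)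
      set y := ψ ⟨(x : Fin m), Finset.mem_sdiff.mpr ⟨x.2, h⟩⟩ with hy
      have hyB : (y : Fin m) ∈ B := (Finset.mem_sdiff.mp y.2).1
      have hyJ : (y : Fin m) ∉ J := (Finset.mem_sdiff.mp y.2).2
      have hyK : (y : Fin m) ∉ K := (Finset.mem_sdiff.mp hyB).2
      have hyS : (y : Fin m) ∈ Sᶜ := by
        rw [Finset.mem_compl]; intro hyS; exact hyJ (hSJ hyS)
      exact hmin _ hxK _ (Finset.mem_sdiff.mpr ⟨hyS, hyK⟩)
  -- main inequality
  have hMne : (Finset.range (m - S.card + 1)).Nonempty := by simp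
  set M := (Finset.range (m - S.card + 1)).sup' hMne (fun i => p (Finset.univ \ I i)) with hM
  have hsubS : ∀ i, i ≤ m - S.card → S ⊆ Finset.univ \ I i := by
    intro i hi x hx
    refine Finset.mem_sdiff.mpr ⟨Finset.mem_univ _, fun hxI => ?_⟩
    exact Finset.mem_compl.mp ((hIgood i hi).1 hxI) hx
  apply IsLeast.csInf_eq
  constructor
  · refine ⟨⟨?_, ?_⟩, ?_⟩
    · refine le_trans (prange (Finset.univ \ I 0)).1 ?_
      exact Finset.le_sup' (fun i => p (Finset.univ \ I i))
        (Finset.mem_range.mpr (Nat.succ_pos _))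
    · exact Finset.sup'_le _ _ (fun i _ => (prange _).2)
    · intro J hSJ
      have hScard : S.card ≤ J.card := Finset.card_le_card hSJ
      have hi : m - J.card ≤ m - S.card := Nat.sub_le_sub_left hScard m
      obtain ⟨h1, h2, h3⟩ := hIgood (m - J.card) hi
      refine le_trans (build J (I (m - J.card)) h1 hSJ h2 h3) ?_
      exact Finset.le_sup' (fun i => p (Finset.univ \ I i))
        (Finset.mem_range.mpr (by omega))
  · intro α hα
    refine Finset.sup'_le _ _ (fun i hi => ?_)
    exact hα.2 _ (hsubS i (by simpa [Nat.lt_succ_iff] using Finset.mem_range.mp hi))
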